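/- Let R be a commutative ring, I a nonzero ideal of R, f ∈ R, and S = S(f) the pseudocanonical cover of R via f. Then S is an integral domain if and only if R is an integral domain and f is not a square in the total ring of fractions of R, i.e., there is no element g of the localization of R at its set of nonzerodivisors with g² equal to the image of f. -/

import Mathlib

open Polynomial

/-- The set `{a + b·t : a ∈ R, b ∈ I}` inside `A = R[T]/(T² − f)`. -/
def pccSet {R : Type*} [CommRing R] (I : Ideal R) (f : R) :
    Set (AdjoinRoot (X ^ 2 - C f)) :=
  {x | ∃ a b : R, b ∈ I ∧
    x = algebraMap R (AdjoinRoot (X ^ 2 - C f)) a +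
        algebraMap R (AdjoinRoot (X ^ 2 - C f)) b * AdjoinRoot.root (X ^ 2 - C f)}

/-- The pseudocanonical cover `S(f) = R + It` of `R` via `f`, as a subring of
`A = R[T]/(T² − f)`. -/
noncomputable def pcc {R : Type*} [CommRing R] (I : Ideal R) (f : R) :
    Subring (AdjoinRoot (X ^ 2 - C f)) where
  carrier := pccSet I f
  one_mem' := ⟨1, 0, I.zero_mem, by simp⟩
  zero_mem' := ⟨0, 0, I.zero_mem, by simp⟩
  add_mem' := by
    rintro x y ⟨a, b, hb, rfl⟩ ⟨c, d, hd, rfl⟩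
    exact ⟨a + c, b + d, I.add_mem hb hd, by simp only [map_add]; ring⟩
  neg_mem' := by
    rintro x ⟨a, b, hb, rfl⟩
    exact ⟨-a, -b, I.neg_mem hb, by simp only [map_neg]; ring⟩
  mul_mem' := by
    rintro x y ⟨a, b, hb, rfl⟩ ⟨c, d, hd, rfl⟩
    refine ⟨a * c + b * d * f, a * d + b * c, I.add_mem (I.mul_mem_left a hd) (I.mul_mem_right c hb), ?_⟩
    have hroot : AdjoinRoot.root (X ^ 2 - C f) ^ 2 =
        algebraMap R (AdjoinRoot (X ^ 2 - C f)) f := by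
      have h := AdjoinRoot.eval₂_root (X ^ 2 - C f)
      simp only [eval₂_sub, eval₂_pow, eval₂_X, eval₂_C, sub_eq_zero] at h
      exact h
    simp only [map_add, map_mul]
    linear_combination (algebraMap R (AdjoinRoot (X ^ 2 - C f)) b *
      algebraMap R (AdjoinRoot (X ^ 2 - C f)) d) * hroot

/-- The canonical ring homomorphism `R → S(f)`. -/
noncomputable def toPcc {R : Type*} [CommRing R] (I : Ideal R) (f : R) :
    R →+* pcc I f :=
  (algebraMap R (AdjoinRoot (X ^ 2 - C f))).codRestrict (pcc I f)
    (fun a => ⟨a, 0, I.zero_mem, by simp⟩)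

/-- The element `u·t` of `S(f)`, for `u ∈ I`. -/
noncomputable def utElem {R : Type*} [CommRing R] (I : Ideal R) (f : R) (u : R) (hu : u ∈ I) :
    pcc I f :=
  ⟨algebraMap R (AdjoinRoot (X ^ 2 - C f)) u * AdjoinRoot.root (X ^ 2 - C f),
    0, u, hu, by simp⟩

section Aux

variable {R : Type*} [CommRing R] (f : R)

lemma pccRootSq :
    AdjoinRoot.root (X ^ 2 - C f) ^ 2 = algebraMap R (AdjoinRoot (X ^ 2 - C f)) f := by
  have h := AdjoinRoot.eval₂_root (X ^ 2 - C f)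
  simp only [eval₂_sub, eval₂_pow, eval₂_X, eval₂_C, sub_eq_zero] at h
  exact h

lemma pccUnique [Nontrivial R] {a b : R}
    (h : algebraMap R (AdjoinRoot (X ^ 2 - C f)) a +
        algebraMap R (AdjoinRoot (X ^ 2 - C f)) b * AdjoinRoot.root (X ^ 2 - C f) = 0) :
    a = 0 ∧ b = 0 := by
  have hm : (X ^ 2 - C f).Monic := monic_X_pow_sub_C f two_ne_zero
  have hmk : AdjoinRoot.mk (X ^ 2 - C f) (C a + C b * X) = 0 := by
    rw [map_add, map_mul, AdjoinRoot.mk_C, AdjoinRoot.mk_C, AdjoinRoot.mk_X,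
      ← AdjoinRoot.algebraMap_eq]
    exact h
  have hdvd := AdjoinRoot.mk_eq_zero.mp hmk
  have hq : (C a + C b * X : R[X]) = 0 := by
    by_contra h0
    refine hm.not_dvd_of_degree_lt h0 ?_ hdvd
    rw [degree_X_pow_sub_C (by norm_num) f]
    calc (C a + C b * X).degree ≤ max (C a).degree (C b * X).degree := degree_add_le _ _
      _ ≤ max 0 1 := max_le_max degree_C_le (degree_C_mul_X_le b)
      _ < 2 := by norm_num
  constructor
  · have := congrArg (fun p => coeff p 0) hq
    simpa using this
  · have := congrArg (fun p => coeff p 1) hq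
    simpa using this

lemma pccRepr [Nontrivial R] (x : AdjoinRoot (X ^ 2 - C f)) :
    ∃ a b : R, x = algebraMap R (AdjoinRoot (X ^ 2 - C f)) a +
        algebraMap R (AdjoinRoot (X ^ 2 - C f)) b * AdjoinRoot.root (X ^ 2 - C f) := by
  have hm : (X ^ 2 - C f).Monic := monic_X_pow_sub_C f two_ne_zero
  induction x using AdjoinRoot.induction_on with
  | ih q =>
    refine ⟨(q %ₘ (X ^ 2 - C f)).coeff 0, (q %ₘ (X ^ 2 - C f)).coeff 1, ?_⟩
    have hlt : (q %ₘ (X ^ 2 - C f)).degree ≤ 1 := by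
      have := degree_modByMonic_lt q hm
      rw [degree_X_pow_sub_C (by norm_num) f] at this
      exact Order.le_of_lt_succ (by exact_mod_cast this)
    have key : AdjoinRoot.mk (X ^ 2 - C f) q =
        AdjoinRoot.mk (X ^ 2 - C f) (q %ₘ (X ^ 2 - C f)) := by
      conv_lhs => rw [← modByMonic_add_div q (X ^ 2 - C f)]
      rw [map_add, map_mul, AdjoinRoot.mk_self, zero_mul, add_zero]
    rw [key]
    conv_lhs => rw [eq_X_add_C_of_degree_le_one hlt]
    rw [map_add, map_mul, AdjoinRoot.mk_C, AdjoinRoot.mk_C, AdjoinRoot.mk_X,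
      ← AdjoinRoot.algebraMap_eq]
    ring

/-- If `f` is not a square in the fraction field, then `a² = f b²` forces `a = b = 0`. -/
lemma pccNotSqAux [IsDomain R]
    (hns : ¬∃ g : Localization (nonZeroDivisors R),
        g ^ 2 = algebraMap R (Localization (nonZeroDivisors R)) f)
    {a b : R} (hab : a ^ 2 = f * b ^ 2) : a = 0 ∧ b = 0 := by
  have hb : b = 0 := by
    by_contra hb
    refine hns ⟨IsLocalization.mk' (Localization (nonZeroDivisors R)) a
      ⟨b, mem_nonZeroDivisors_of_ne_zero hb⟩, ?_⟩
    rw [sq, ← IsLocalization.mk'_mul, IsLocalization.mk'_eq_iff_eq_mul]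
    push_cast
    rw [← map_mul, show a * a = f * (b * b) by linear_combination hab]
    simp [map_mul]
  refine ⟨?_, hb⟩
  rw [hb] at hab
  simpa using pow_eq_zero_iff two_ne_zero |>.mp (by simpa using hab)

end Aux

/-- For a nonzero ideal `I`, the pseudocanonical cover `S(f)` is a
domain if and only if `R` is a domain and `f` is not a square in the total ring of
fractions of `R`. -/
theorem statement2 {R : Type*} [CommRing R] (I : Ideal R) (hI : I ≠ ⊥) (f : R) :
    IsDomain (pcc I f) ↔
      (IsDomain R ∧
        ¬∃ g : Localization (nonZeroDivisors R),
          g ^ 2 = algebraMap R (Localization (nonZeroDivisors R)) f) := by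
  have hNT : Nontrivial R := by
    by_contra h
    rw [not_nontrivial_iff_subsingleton] at h
    exact hI (by ext x; simp [Subsingleton.elim x (0 : R)])
  constructor
  · intro hS
    have hinj : Function.Injective (toPcc I f) := by
      intro a b hab
      have hv : algebraMap R (AdjoinRoot (X ^ 2 - C f)) a =
          algebraMap R (AdjoinRoot (X ^ 2 - C f)) b := congrArg Subtype.val hab
      have h0 : algebraMap R (AdjoinRoot (X ^ 2 - C f)) (a - b) +
          algebraMap R (AdjoinRoot (X ^ 2 - C f)) 0 * AdjoinRoot.root (X ^ 2 - C f) = 0 := by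
        rw [map_sub, hv]; simp
      exact sub_eq_zero.mp (pccUnique f h0).1
    haveI hR : IsDomain R := Function.Injective.isDomain (toPcc I f) hinj
    refine ⟨hR, ?_⟩
    rintro ⟨g, hg⟩
    obtain ⟨⟨a, s⟩, rfl⟩ := IsLocalization.mk'_surjective (nonZeroDivisors R) g
    dsimp only at hg
    have hsq : a ^ 2 = f * (s : R) ^ 2 := by
      apply IsFractionRing.injective R (Localization (nonZeroDivisors R))
      have hspec := IsLocalization.mk'_spec (Localization (nonZeroDivisors R)) a s
      have : (IsLocalization.mk' (Localization (nonZeroDivisors R)) a s *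
          algebraMap R (Localization (nonZeroDivisors R)) (s : R)) ^ 2 =
          (algebraMap R (Localization (nonZeroDivisors R)) a) ^ 2 := by rw [hspec]
      rw [mul_pow, hg] at this
      rw [map_pow, map_mul, map_pow, ← this]
    obtain ⟨u, huI, hu0⟩ := Submodule.exists_mem_ne_zero_of_ne_bot hI
    have hs0 : (s : R) ≠ 0 := nonZeroDivisors.ne_zero s.2
    set ι := algebraMap R (AdjoinRoot (X ^ 2 - C f)) with hι
    set rt := AdjoinRoot.root (X ^ 2 - C f) with hrt
    have hmem : u * (s : R) ∈ I := I.mul_mem_right _ huI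
    let x : pcc I f := ⟨ι (u * a) + ι (u * s) * rt, u * a, u * s, hmem, rfl⟩
    let y : pcc I f := ⟨ι (u * a) - ι (u * s) * rt, u * a, -(u * s), I.neg_mem hmem,
      by rw [map_neg]; ring⟩
    have hr := pccRootSq f
    have hA : ι a ^ 2 = ι f * ι s ^ 2 := by
      rw [← map_pow, ← map_pow, ← map_mul, hsq]
    have hxy : x * y = 0 := by
      apply Subtype.ext
      show (ι (u * a) + ι (u * s) * rt) * (ι (u * a) - ι (u * s) * rt) = 0
      simp only [map_mul]
      linear_combination (ι u) ^ 2 * hA - (ι u * ι s) ^ 2 * hr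
    rcases mul_eq_zero.mp hxy with h | h
    · have hv : ι (u * a) + ι (u * s) * rt = 0 := congrArg Subtype.val h
      have := (pccUnique f hv).2
      exact hs0 ((mul_eq_zero.mp this).resolve_left hu0)
    · have hv : ι (u * a) + ι (-(u * s)) * rt = 0 := by
        have : ι (u * a) - ι (u * s) * rt = 0 := congrArg Subtype.val h
        rw [map_neg]; linear_combination this
      have h2 := neg_eq_zero.mp (pccUnique f hv).2
      exact hs0 ((mul_eq_zero.mp h2).resolve_left hu0)
  · rintro ⟨hR, hns⟩
    set ι := algebraMap R (AdjoinRoot (X ^ 2 - C f)) with hι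
    set rt := AdjoinRoot.root (X ^ 2 - C f) with hrt
    have hr := pccRootSq f
    haveI : Nontrivial (AdjoinRoot (X ^ 2 - C f)) := by
      refine ⟨0, 1, fun h => ?_⟩
      have h0 : ι 1 + ι 0 * rt = 0 := by simpa using h.symm
      exact one_ne_zero (pccUnique f h0).1
    haveI : NoZeroDivisors (AdjoinRoot (X ^ 2 - C f)) := by
      refine ⟨fun {p q} hpq => ?_⟩
      obtain ⟨a, b, rfl⟩ := pccRepr f p
      obtain ⟨c, d, rfl⟩ := pccRepr f q
      have hexp : (ι a + ι b * rt) * (ι c + ι d * rt) =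
          ι (a * c + f * (b * d)) + ι (a * d + b * c) * rt := by
        simp only [map_add, map_mul]
        linear_combination (ι b * ι d) * hr
      rw [hexp] at hpq
      obtain ⟨h1, h2⟩ := pccUnique f hpq
      have key : (a ^ 2 - f * b ^ 2) * (c ^ 2 - f * d ^ 2) = 0 := by
        linear_combination (a * c + f * (b * d)) * h1 - f * (a * d + b * c) * h2
      rcases mul_eq_zero.mp key with h | h
      · left
        obtain ⟨ha, hb⟩ := pccNotSqAux f hns (sub_eq_zero.mp h)
        rw [ha, hb]; simp
      · right
        obtain ⟨hc, hd⟩ := pccNotSqAux f hns (sub_eq_zero.mp h)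
        rw [hc, hd]; simp
    haveI : IsDomain (AdjoinRoot (X ^ 2 - C f)) := NoZeroDivisors.to_isDomain _
    infer_instance
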